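/- Let a : [-1,0] → ℝ be Lipschitz continuous with a(s) > 0 for all s; set λ := 1/a(0)^2, Γ(s) := 1/(2a(s)^2) - 1/(2a(0)^2), Γ_min := min Γ, and for κ ∈ (-2Γ_min, ∞) let K_κ(s) := ∫_{-1}^s (κ + 2Γ(t))^{-1/2} dt. Fix μ > 0 and define the flow force of a laminar flow K by 𝒮(K) := ∫_{-1}^0 [1/(2K'(s)^2) + 1/(2a(s)^2) - μ (K(s) - 1)] K'(s) ds. Then for every κ ∈ (-2Γ_min, ∞): 𝒮(K_κ) = ∫_{-1}^0 (κ + 2Γ(t))^{1/2} dt + ((λ - κ)/2) K_κ(0) - (μ/2)(K_κ(0) - 1)^2 + μ/2. -/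

import Mathlib

open MeasureTheory intervalIntegral Set

theorem flow_force_laminar_evaluation
    (a : ℝ → ℝ) (K : NNReal)
    (hlip : LipschitzOnWith K a (Set.Icc (-1 : ℝ) 0))
    (hpos : ∀ s ∈ Set.Icc (-1 : ℝ) 0, 0 < a s)
    (lam : ℝ) (hlam : lam = 1 / a 0 ^ 2)
    (Γ : ℝ → ℝ) (hΓ : ∀ s, Γ s = 1 / (2 * a s ^ 2) - 1 / (2 * a 0 ^ 2))
    (Γmin : ℝ) (hmin : IsLeast (Γ '' Set.Icc (-1 : ℝ) 0) Γmin)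
    (Kf : ℝ → ℝ → ℝ)
    (hK : ∀ κ s, Kf κ s = ∫ t in (-1 : ℝ)..s, (Real.sqrt (κ + 2 * Γ t))⁻¹)
    (μ : ℝ) (hμ : 0 < μ) :
    ∀ κ ∈ Set.Ioi (-2 * Γmin),
      (∫ s in (-1 : ℝ)..0,
          (1 / (2 * ((Real.sqrt (κ + 2 * Γ s))⁻¹) ^ 2) + 1 / (2 * a s ^ 2)
            - μ * (Kf κ s - 1)) * (Real.sqrt (κ + 2 * Γ s))⁻¹)
        = (∫ t in (-1 : ℝ)..0, Real.sqrt (κ + 2 * Γ t))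
          + (lam - κ) / 2 * Kf κ 0 - μ / 2 * (Kf κ 0 - 1) ^ 2 + μ / 2 := by
  intro κ hκ
  have h10 : (-1 : ℝ) ≤ 0 := by norm_num
  have huIcc : Set.uIcc (-1 : ℝ) 0 = Set.Icc (-1 : ℝ) 0 := Set.uIcc_of_le h10
  -- positivity of g := κ + 2Γ on Icc
  have hgpos : ∀ t ∈ Set.Icc (-1 : ℝ) 0, 0 < κ + 2 * Γ t := by
    intro t ht
    have h1 : Γmin ≤ Γ t := hmin.2 ⟨t, ht, rfl⟩
    have : -2 * Γmin < κ := hκ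
    linarith
  -- a continuous on Icc
  have ha : ContinuousOn a (Set.Icc (-1 : ℝ) 0) := hlip.continuousOn
  -- Γ continuous on Icc
  have hΓc : ContinuousOn Γ (Set.Icc (-1 : ℝ) 0) := by
    have : ContinuousOn (fun s => 1 / (2 * a s ^ 2) - 1 / (2 * a 0 ^ 2))
        (Set.Icc (-1 : ℝ) 0) := by
      apply ContinuousOn.sub
      · exact ContinuousOn.div continuousOn_const
          (by fun_prop)
          (fun s hs => by have := hpos s hs; positivity)
      · exact continuousOn_const
    exact this.congr (fun s hs => hΓ s)
  have hgc : ContinuousOn (fun t => κ + 2 * Γ t) (Set.Icc (-1 : ℝ) 0) := by fun_prop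
  -- w := (√g)⁻¹ continuous on Icc
  set w : ℝ → ℝ := fun t => (Real.sqrt (κ + 2 * Γ t))⁻¹ with hw
  have hsqrtpos : ∀ t ∈ Set.Icc (-1 : ℝ) 0, 0 < Real.sqrt (κ + 2 * Γ t) :=
    fun t ht => Real.sqrt_pos.mpr (hgpos t ht)
  have hwc : ContinuousOn w (Set.Icc (-1 : ℝ) 0) := by
    apply ContinuousOn.inv₀ (hgc.sqrt)
    exact fun t ht => (hsqrtpos t ht).ne'
  have hsqc : ContinuousOn (fun t => Real.sqrt (κ + 2 * Γ t)) (Set.Icc (-1 : ℝ) 0) := hgc.sqrt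
  -- Kf κ continuous on Icc
  have hKint : IntegrableOn w (Set.uIcc (-1 : ℝ) 0) := by
    rw [huIcc]; exact hwc.integrableOn_compact isCompact_Icc
  have hKfc : ContinuousOn (Kf κ) (Set.Icc (-1 : ℝ) 0) := by
    have := intervalIntegral.continuousOn_primitive_interval (a := (-1:ℝ)) (b := (0:ℝ))
      (μ := volume) (f := w) hKint
    rw [huIcc] at this
    exact this.congr (fun s hs => hK κ s)
  -- derivative of Kf κ at interior points
  have hwCA : ∀ s ∈ Set.Ioo (-1 : ℝ) 0, ContinuousAt w s := by
    intro s hs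
    have hmem : Set.Icc (-1 : ℝ) 0 ∈ nhds s :=
      Icc_mem_nhds hs.1 hs.2
    exact (hwc.continuousAt hmem)
  have hKderiv : ∀ s ∈ Set.Ioo (-1 : ℝ) 0, HasDerivAt (Kf κ) (w s) s := by
    intro s hs
    have hint : IntervalIntegrable w volume (-1) s := by
      apply ContinuousOn.intervalIntegrable
      apply hwc.mono
      rw [Set.uIcc_of_le hs.1.le]
      exact Set.Icc_subset_Icc le_rfl hs.2.le
    have hmeas : StronglyMeasurableAtFilter w (nhds s) volume :=
      ContinuousAt.stronglyMeasurableAtFilter isOpen_Ioo hwCA s hs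
    have := intervalIntegral.integral_hasDerivAt_right hint hmeas (hwCA s hs)
    exact HasDerivAt.congr_of_eventuallyEq this
      (Filter.Eventually.of_forall (fun u => (hK κ u)))
  -- FTC: ∫ (Kf - 1) * w = ((Kf 0 - 1)^2 - (Kf (-1) - 1)^2) / 2
  have hKm1 : Kf κ (-1) = 0 := by simp [hK κ (-1)]
  have hF : (∫ s in (-1 : ℝ)..0, (Kf κ s - 1) * w s)
      = (Kf κ 0 - 1) ^ 2 / 2 - (Kf κ (-1) - 1) ^ 2 / 2 := by
    have hcont : ContinuousOn (fun s => (Kf κ s - 1) ^ 2 / 2) (Set.Icc (-1 : ℝ) 0) := by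
      fun_prop
    have hderiv : ∀ s ∈ Set.Ioo (-1 : ℝ) 0,
        HasDerivWithinAt (fun s => (Kf κ s - 1) ^ 2 / 2) ((Kf κ s - 1) * w s) (Set.Ioi s) s := by
      intro s hs
      apply HasDerivAt.hasDerivWithinAt
      have h1 : HasDerivAt (fun s => Kf κ s - 1) (w s) s := (hKderiv s hs).sub_const 1
      have h2 : HasDerivAt (fun s => (Kf κ s - 1) ^ 2 / 2)
          (((2 : ℕ) : ℝ) * (Kf κ s - 1) ^ 1 * w s / 2) s := (h1.pow 2).div_const 2
      have h3 : HasDerivAt (fun s => (Kf κ s - 1) ^ 2 / 2) ((Kf κ s - 1) * w s) s := by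
        convert h2 using 1; ring
      exact h3
    have hint : IntervalIntegrable (fun s => (Kf κ s - 1) * w s) volume (-1) 0 := by
      apply ContinuousOn.intervalIntegrable
      rw [huIcc]
      exact (hKfc.sub continuousOn_const).mul hwc
    exact intervalIntegral.integral_eq_sub_of_hasDeriv_right_of_le h10 hcont hderiv hint
  -- integrability of the pieces
  have hI1 : IntervalIntegrable (fun t => Real.sqrt (κ + 2 * Γ t)) volume (-1) 0 := by
    apply ContinuousOn.intervalIntegrable; rw [huIcc]; exact hsqc
  have hI2 : IntervalIntegrable w volume (-1) 0 := by
    apply ContinuousOn.intervalIntegrable; rw [huIcc]; exact hwc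
  have hI3 : IntervalIntegrable (fun s => (Kf κ s - 1) * w s) volume (-1) 0 := by
    apply ContinuousOn.intervalIntegrable; rw [huIcc]
    exact (hKfc.sub continuousOn_const).mul hwc
  -- pointwise rewriting of the integrand
  have hcongr : (∫ s in (-1 : ℝ)..0,
          (1 / (2 * ((Real.sqrt (κ + 2 * Γ s))⁻¹) ^ 2) + 1 / (2 * a s ^ 2)
            - μ * (Kf κ s - 1)) * (Real.sqrt (κ + 2 * Γ s))⁻¹)
      = ∫ s in (-1 : ℝ)..0, (Real.sqrt (κ + 2 * Γ s)
          + (lam - κ) / 2 * w s - μ * ((Kf κ s - 1) * w s)) := by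
    apply intervalIntegral.integral_congr
    intro s hs
    rw [huIcc] at hs
    have hgs := hgpos s hs
    have hss := hsqrtpos s hs
    have has := hpos s hs
    have hsq : Real.sqrt (κ + 2 * Γ s) ^ 2 = κ + 2 * Γ s := Real.sq_sqrt hgs.le
    have ha0 : a 0 ≠ 0 := (hpos 0 (by norm_num)).ne'
    have hlam' : 1 / (2 * a s ^ 2) = Γ s + lam / 2 := by
      rw [hΓ s, hlam]; field_simp; ring
    show (1 / (2 * ((Real.sqrt (κ + 2 * Γ s))⁻¹) ^ 2) + 1 / (2 * a s ^ 2)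
            - μ * (Kf κ s - 1)) * (Real.sqrt (κ + 2 * Γ s))⁻¹
        = Real.sqrt (κ + 2 * Γ s) + (lam - κ) / 2 * w s - μ * ((Kf κ s - 1) * w s)
    rw [hlam', hw]
    beta_reduce
    set r := Real.sqrt (κ + 2 * Γ s) with hr
    have hrne : r ≠ 0 := hss.ne'
    rw [show (1 : ℝ) / (2 * r⁻¹ ^ 2) = r ^ 2 / 2 by rw [inv_pow]; field_simp]
    rw [show κ = r ^ 2 - 2 * Γ s by rw [hsq]; ring]
    field_simp
    ring
  rw [hcongr]
  rw [intervalIntegral.integral_sub (hI1.add (hI2.const_mul _)) (hI3.const_mul μ),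
    intervalIntegral.integral_add hI1 (hI2.const_mul _),
    intervalIntegral.integral_const_mul, intervalIntegral.integral_const_mul]
  rw [hF, hKm1, ← hK κ 0]
  ring
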